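/- arXiv:1410.0951 — 3 statements merged into one kernel-verified Lean document; each statement's English description precedes it below -/
import Mathlib

section
/- Let P_1, P_2 be orthogonal projections on a finite-dimensional Hilbert space, and let μ be the smallest eigenvalue of P_1 P_2 P_1 restricted to the range of P_1 (i.e., μ = min{⟨ψ|P_2|ψ⟩ : ψ in range(P_1), ‖ψ‖ = 1}). Then the smallest eigenvalue of (I − P_1) + P_2 is at least 1 − √(1 − μ), which in turn is at least μ/2. -/
open Matrix

namespace Stmt3Aux

variable {n : ℕ}

noncomputable def e (x : Fin n → ℂ) : EuclideanSpace ℂ (Fin n) := (WithLp.equiv 2 _).symm x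

lemma e_inner (x y : Fin n → ℂ) : (inner ℂ (e x) (e y) : ℂ) = star x ⬝ᵥ y := by
  simp [e, PiLp.inner_apply, dotProduct, mul_comm]

lemma e_add (x y : Fin n → ℂ) : e (x + y) = e x + e y := rfl
lemma e_sub (x y : Fin n → ℂ) : e (x - y) = e x - e y := rfl

lemma nsq (x : Fin n → ℂ) : (star x ⬝ᵥ x) = ((‖e x‖ : ℂ))^2 := by
  rw [← e_inner]; exact inner_self_eq_norm_sq_to_K (e x)

lemma nsq_re (x : Fin n → ℂ) : (star x ⬝ᵥ x).re = ‖e x‖^2 := by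
  rw [nsq, ← Complex.ofReal_pow, Complex.ofReal_re]

lemma herm_shift (M : Matrix (Fin n) (Fin n) ℂ) (hM : M.IsHermitian) (x y : Fin n → ℂ) :
    star (M.mulVec x) ⬝ᵥ y = star x ⬝ᵥ M.mulVec y := by
  rw [star_mulVec, hM.eq, dotProduct_mulVec]

lemma proj_self (M : Matrix (Fin n) (Fin n) ℂ) (hM : M.IsHermitian) (hMi : M * M = M)
    (x : Fin n → ℂ) : star x ⬝ᵥ M.mulVec x = star (M.mulVec x) ⬝ᵥ (M.mulVec x) := by
  rw [herm_shift M hM, mulVec_mulVec, hMi]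

lemma proj_re (M : Matrix (Fin n) (Fin n) ℂ) (hM : M.IsHermitian) (hMi : M * M = M)
    (x : Fin n → ℂ) : (star x ⬝ᵥ M.mulVec x).re = ‖e (M.mulVec x)‖^2 := by
  rw [proj_self M hM hMi, nsq_re]

lemma proj_orth (M : Matrix (Fin n) (Fin n) ℂ) (hM : M.IsHermitian) (hMi : M * M = M)
    (x : Fin n → ℂ) : (inner ℂ (e (M.mulVec x)) (e (x - M.mulVec x)) : ℂ) = 0 := by
  rw [e_inner, dotProduct_sub, herm_shift M hM x x, ← proj_self M hM hMi,
    proj_self M hM hMi, ← herm_shift M hM, sub_self]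

lemma proj_split (M : Matrix (Fin n) (Fin n) ℂ) (hM : M.IsHermitian) (hMi : M * M = M)
    (x : Fin n → ℂ) : ‖e x‖^2 = ‖e (M.mulVec x)‖^2 + ‖e (x - M.mulVec x)‖^2 := by
  have hx : e x = e (M.mulVec x) + e (x - M.mulVec x) := by
    rw [← e_add]; congr 1; simp
  rw [hx, norm_add_sq (𝕜 := ℂ)]
  rw [proj_orth M hM hMi]
  simp

end Stmt3Aux

open Stmt3Aux

set_option maxHeartbeats 1000000 in
lemma key_ineq (c s t d a g b B : ℝ) (hc0 : 0 ≤ c) (hc1 : c ≤ 1) (hs : 0 ≤ s) (ht : 0 ≤ t)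
    (hd : 0 ≤ d) (ha : 0 ≤ a) (hg : 0 ≤ g) (hb : 0 ≤ b) (hB : 0 ≤ B)
    (h1 : s^2 + t^2 = 1) (h2 : d^2 + a^2 = s^2) (h3 : g^2 + b^2 = t^2)
    (h4 : a ≤ c*s) (h5 : d ≤ B + g) (h6 : 1 - (a+b)^2 ≤ B^2) :
    1 - c ≤ t^2 + B^2 := by
  have hE : (1 - c^2)*a^2 ≤ c^2*d^2 := by nlinarith [mul_self_le_mul_self ha h4]
  have hgoal : s^2 - c ≤ B^2 := by
    rcases le_total g d with hcase | hcase
    · -- case g ≤ d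
      have hdg : (d - g)^2 ≤ B^2 := by nlinarith
      have hΨ2 : c*(d-g)^2 + (1-c)*(1-(a+b)^2) - (s^2 - c)
          = c - a^2 + g^2 - 2*c*(d*g) - 2*(1-c)*(a*b) := by
        linear_combination c*h2 - (1-c)*h3 - (1-c)*h1
      have hΨpos : 0 ≤ c - a^2 + g^2 - 2*c*(d*g) - 2*(1-c)*(a*b) := by
        rcases hc0.eq_or_lt with hc | hc
        · have ha0 : a = 0 := le_antisymm (by rw [← hc] at h4; linarith) ha
          rw [← hc, ha0]; nlinarith [sq_nonneg g]
        · have hid : c*(1+c)*(c - a^2 + g^2 - 2*c*(d*g) - 2*(1-c)*(a*b))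
              = c*((1+c)*g - c*d)^2 + (c^2*d^2 - (1-c^2)*a^2)
                + (1+c)*(c*b - (1-c)*a)^2 := by
            linear_combination (-(c^2*(1+c)))*h1 + (-(c^2*(1+c)))*h2 + (-(c^2*(1+c)))*h3
          have hk : 0 < c*(1+c) := by nlinarith
          have hrhs : 0 ≤ c*((1+c)*g - c*d)^2 + (c^2*d^2 - (1-c^2)*a^2)
                + (1+c)*(c*b - (1-c)*a)^2 :=
            add_nonneg (add_nonneg (mul_nonneg hc.le (sq_nonneg _)) (by linarith))
              (mul_nonneg (by linarith) (sq_nonneg _))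
          have hm : 0 ≤ c*(1+c)*(c - a^2 + g^2 - 2*c*(d*g) - 2*(1-c)*(a*b)) := by
            rw [hid]; exact hrhs
          nlinarith [hm, hk]
      linarith [mul_le_mul_of_nonneg_left hdg hc0,
        mul_le_mul_of_nonneg_left h6 (by linarith : (0:ℝ) ≤ 1 - c)]
    · -- case d ≤ g
      have hΨ'pos : 0 ≤ c - s^2 + (1-c)*(1-(a+b)^2) := by
        rcases hc0.eq_or_lt with hc | hc
        · have ha0 : a = 0 := le_antisymm (by rw [← hc] at h4; linarith) ha
          rw [← hc, ha0]; nlinarith [sq_nonneg g]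
        · have hid2 : c*(c - s^2 + (1-c)*(1-(a+b)^2))
              = (c*b - c*(1-c)*s)^2 + c*(1-c)*s^2 + c*(g^2 - d^2)
                + c*(2-c)*(c^2*s^2 - a^2) + 2*(c*(1-c))*((c*s - a)*b) := by
            linear_combination (-c)*h1 + c*h2 + (-c)*h3
          have hu1 : 0 ≤ g^2 - d^2 := by nlinarith
          have hu2 : 0 ≤ c^2*s^2 - a^2 := by nlinarith [mul_self_le_mul_self ha h4]
          have hm : 0 ≤ c*(c - s^2 + (1-c)*(1-(a+b)^2)) := by
            rw [hid2]
            have t1 : 0 ≤ c*(1-c)*s^2 := mul_nonneg (mul_nonneg hc.le (by linarith)) (sq_nonneg s)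
            have t2 : 0 ≤ c*(g^2 - d^2) := mul_nonneg hc.le hu1
            have t3 : 0 ≤ c*(2-c)*(c^2*s^2 - a^2) :=
              mul_nonneg (mul_nonneg hc.le (by linarith)) hu2
            have t4 : 0 ≤ 2*(c*(1-c))*((c*s - a)*b) :=
              mul_nonneg (by nlinarith : (0:ℝ) ≤ 2*(c*(1-c))) (mul_nonneg (by linarith) hb)
            nlinarith [sq_nonneg (c*b - c*(1-c)*s)]
          nlinarith [hm, hc]
      rcases le_total (1-(a+b)^2) 0 with hsign | hsign
      · nlinarith [mul_nonpos_of_nonneg_of_nonpos (by linarith : (0:ℝ) ≤ 1-c) hsign, sq_nonneg B]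
      · nlinarith [mul_le_mul_of_nonneg_right (by linarith : 1-c ≤ 1) hsign]
  linarith


set_option maxHeartbeats 1000000 in
/-- Let `P₁, P₂` be orthogonal projections, and let `μ` be the minimum of the
Rayleigh quotient `⟨ψ|P₂|ψ⟩` over unit vectors `ψ` in the range of `P₁`.
Then every eigenvalue of `(I − P₁) + P₂` is at least `1 − √(1 − μ) ≥ μ/2`. -/
theorem stmt_3 (n : ℕ) (P₁ P₂ : Matrix (Fin n) (Fin n) ℂ)
    (hP₁herm : P₁.IsHermitian) (hP₁idem : P₁ * P₁ = P₁)
    (hP₂herm : P₂.IsHermitian) (hP₂idem : P₂ * P₂ = P₂)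
    (hrange : ∃ ψ : Fin n → ℂ, P₁.mulVec ψ = ψ ∧ star ψ ⬝ᵥ ψ = 1)
    (μ : ℝ)
    (hμ_lb : ∀ ψ : Fin n → ℂ, P₁.mulVec ψ = ψ → star ψ ⬝ᵥ ψ = 1 →
      μ ≤ (star ψ ⬝ᵥ P₂.mulVec ψ).re)
    (hμ_min : ∃ ψ : Fin n → ℂ, P₁.mulVec ψ = ψ ∧ star ψ ⬝ᵥ ψ = 1 ∧
      (star ψ ⬝ᵥ P₂.mulVec ψ).re = μ) :
    (∀ ψ : Fin n → ℂ, star ψ ⬝ᵥ ψ = 1 →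
        1 - Real.sqrt (1 - μ) ≤ (star ψ ⬝ᵥ ((1 - P₁ + P₂).mulVec ψ)).re) ∧
      μ / 2 ≤ 1 - Real.sqrt (1 - μ) := by
  -- bounds on μ
  obtain ⟨ψ₀, hψ₀fix, hψ₀unit, hψ₀val⟩ := hμ_min
  have hψ₀nsq : ‖e ψ₀‖^2 = 1 := by
    rw [← nsq_re, hψ₀unit]; simp
  have hμ0 : 0 ≤ μ := by
    rw [← hψ₀val, proj_re P₂ hP₂herm hP₂idem]
    positivity
  have hμ1 : μ ≤ 1 := by
    have hsplit := proj_split P₂ hP₂herm hP₂idem ψ₀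
    rw [hψ₀nsq] at hsplit
    rw [← hψ₀val, proj_re P₂ hP₂herm hP₂idem]
    nlinarith [sq_nonneg (‖e (ψ₀ - P₂.mulVec ψ₀)‖)]
  set c : ℝ := Real.sqrt (1 - μ) with hc_def
  have hc0 : 0 ≤ c := Real.sqrt_nonneg _
  have hc2 : c^2 = 1 - μ := Real.sq_sqrt (by linarith)
  have hc1 : c ≤ 1 := by nlinarith
  constructor
  · intro ψ hψ
    -- set up all quantities
    set u : Fin n → ℂ := P₁.mulVec ψ with hu_def
    set v : Fin n → ℂ := ψ - u with hv_def
    have huv : u + v = ψ := by rw [hv_def]; ring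
    set s : ℝ := ‖e u‖ with hs_def
    set t : ℝ := ‖e v‖ with ht_def
    set d : ℝ := ‖e (P₂.mulVec u)‖ with hd_def
    set a : ℝ := ‖e (u - P₂.mulVec u)‖ with ha_def
    set g : ℝ := ‖e (P₂.mulVec v)‖ with hg_def
    set b : ℝ := ‖e (v - P₂.mulVec v)‖ with hb_def
    set B : ℝ := ‖e (P₂.mulVec ψ)‖ with hB_def
    have hψnsq : ‖e ψ‖^2 = 1 := by rw [← nsq_re, hψ]; simp
    -- h1 : s^2 + t^2 = 1
    have h1 : s^2 + t^2 = 1 := by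
      have := proj_split P₁ hP₁herm hP₁idem ψ
      rw [hψnsq] at this
      rw [hs_def, ht_def, hv_def, hu_def]
      linarith
    -- h2 : d^2 + a^2 = s^2
    have h2 : d^2 + a^2 = s^2 := (proj_split P₂ hP₂herm hP₂idem u).symm
    have h3 : g^2 + b^2 = t^2 := (proj_split P₂ hP₂herm hP₂idem v).symm
    -- projection invariance of u
    have hP₁u : P₁.mulVec u = u := by
      rw [hu_def, mulVec_mulVec, hP₁idem]
    -- h4 : a ≤ c * s  (via μ * s^2 ≤ d^2)
    have hmusd : μ * s^2 ≤ d^2 := by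
      rcases eq_or_ne s 0 with hs0 | hs0
      · rw [hs0]; nlinarith [sq_nonneg d]
      · have hspos : 0 < s := lt_of_le_of_ne (norm_nonneg _) (Ne.symm hs0)
        set r : ℝ := s⁻¹ with hr_def
        have hrs : r * s = 1 := inv_mul_cancel₀ hs0
        have hrsC : ((r:ℂ)) * ((s:ℂ)) = 1 := by
          rw [← Complex.ofReal_mul, hrs, Complex.ofReal_one]
        set φ : Fin n → ℂ := (r : ℂ) • u with hφ_def
        have hφ1 : P₁.mulVec φ = φ := by rw [hφ_def, mulVec_smul, hP₁u]
        have husq : star u ⬝ᵥ u = ((s:ℂ))^2 := nsq u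
        have hφ2 : star φ ⬝ᵥ φ = 1 := by
          rw [hφ_def, star_smul, smul_dotProduct, dotProduct_smul, husq]
          simp only [Complex.star_def, Complex.conj_ofReal, smul_eq_mul]
          rw [show ((r:ℂ)) * (((r:ℂ)) * ((s:ℂ))^2) = ((r:ℂ)*(s:ℂ))*((r:ℂ)*(s:ℂ)) by ring, hrsC,
            mul_one]
        have hμle := hμ_lb φ hφ1 hφ2
        have hφ3 : (star φ ⬝ᵥ P₂.mulVec φ).re = r^2 * (star u ⬝ᵥ P₂.mulVec u).re := by
          rw [hφ_def, mulVec_smul, star_smul, smul_dotProduct, dotProduct_smul]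
          simp only [Complex.star_def, Complex.conj_ofReal, smul_eq_mul]
          rw [show ((r:ℂ)) * (((r:ℂ)) * (star u ⬝ᵥ P₂.mulVec u)) =
            (((r^2:ℝ)):ℂ) * (star u ⬝ᵥ P₂.mulVec u) by push_cast; ring]
          simp [Complex.mul_re, ← Complex.ofReal_pow]
        rw [hφ3, proj_re P₂ hP₂herm hP₂idem] at hμle
        have : μ * s^2 ≤ r^2 * d^2 * s^2 := by nlinarith [sq_nonneg s]
        have hr2 : r^2 * d^2 * s^2 = d^2 := by
          rw [show r^2 * d^2 * s^2 = (r*s)^2 * d^2 by ring, hrs]; ring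
        linarith [hr2 ▸ this]
    have h4 : a ≤ c * s := by
      have ha2 : a^2 ≤ (c*s)^2 := by
        have : a^2 = s^2 - d^2 := by linarith
        rw [this]
        nlinarith
      nlinarith [norm_nonneg (e (u - P₂.mulVec u)), mul_nonneg hc0 (norm_nonneg (e u))]
    -- h5 : d ≤ B + g
    have h5 : d ≤ B + g := by
      have hw : P₂.mulVec u = P₂.mulVec ψ - P₂.mulVec v := by
        rw [← huv, mulVec_add]; ring
      rw [hd_def, hw]
      calc ‖e (P₂.mulVec ψ - P₂.mulVec v)‖ = ‖e (P₂.mulVec ψ) - e (P₂.mulVec v)‖ := by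
            rw [e_sub]
        _ ≤ ‖e (P₂.mulVec ψ)‖ + ‖e (P₂.mulVec v)‖ := norm_sub_le _ _
    -- h6 : 1 - (a+b)^2 ≤ B^2
    have h6 : 1 - (a+b)^2 ≤ B^2 := by
      have hcompl : ψ - P₂.mulVec ψ = (u - P₂.mulVec u) + (v - P₂.mulVec v) := by
        rw [← huv, mulVec_add]; ring
      have hle : ‖e (ψ - P₂.mulVec ψ)‖ ≤ a + b := by
        rw [hcompl, e_add]
        exact norm_add_le _ _
      have hsq : ‖e (ψ - P₂.mulVec ψ)‖^2 ≤ (a+b)^2 :=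
        pow_le_pow_left₀ (norm_nonneg _) hle 2
      have hsplit := proj_split P₂ hP₂herm hP₂idem ψ
      rw [hψnsq] at hsplit
      linarith
    -- compute the quadratic form
    have hform : (star ψ ⬝ᵥ ((1 - P₁ + P₂).mulVec ψ)).re = 1 - s^2 + B^2 := by
      rw [add_mulVec, sub_mulVec, one_mulVec, dotProduct_add, dotProduct_sub]
      rw [Complex.add_re, Complex.sub_re, hψ]
      rw [proj_re P₁ hP₁herm hP₁idem, proj_re P₂ hP₂herm hP₂idem]
      simp
      rfl
    rw [hform]
    have := key_ineq c s t d a g b B hc0 hc1 (norm_nonneg _) (norm_nonneg _)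
      (norm_nonneg _) (norm_nonneg _) (norm_nonneg _) (norm_nonneg _) (norm_nonneg _)
      h1 h2 h3 h4 h5 h6
    linarith
  · have hsq : Real.sqrt (1-μ) ≤ 1 - μ/2 := by
      rw [show (1:ℝ) - μ/2 = Real.sqrt ((1-μ/2)^2) from (Real.sqrt_sq (by linarith)).symm]
      exact Real.sqrt_le_sqrt (by nlinarith)
    linarith
end

section
/- Let U_1 = I, U_2, U_3 be D×D unitaries and G = (1/(3√D)) Σ_{i,j=1}^3 U_i U_j ⊗ |i⟩⟨j| (a 3D × 3D matrix). Then G G† is unitarily conjugate (via W = Σ_i U_i ⊗ |i⟩⟨i|) to (1/D) I_D ⊗ (1/3) Σ_{i,i'} |i⟩⟨i'|; in particular G G† has exactly D nonzero eigenvalues, each equal to 1/D. -/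
open Matrix Kronecker

/-- With `U₁ = I`, `U₂, U₃` unitary, `G = (1/(3√D)) Σ_{i,j} U_i U_j ⊗ |i⟩⟨j|` and
`W = Σ_i U_i ⊗ |i⟩⟨i|`, we have `Wᴴ (G Gᴴ) W = (I_D/D) ⊗ ((1/3) Σ_{i,i'} |i⟩⟨i'|)`;
in particular `G Gᴴ` has exactly `D` nonzero eigenvalues, each equal to `1/D`. -/
theorem stmt_7 (D : ℕ) (hD : 1 ≤ D) (U : Fin 3 → Matrix (Fin D) (Fin D) ℂ)
    (hU0 : U 0 = 1) (hU : ∀ i, (U i)ᴴ * U i = 1) :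
    letI G : Matrix (Fin D × Fin 3) (Fin D × Fin 3) ℂ :=
      (((3 : ℝ) * Real.sqrt D : ℝ) : ℂ)⁻¹ •
        ∑ i : Fin 3, ∑ j : Fin 3, (U i * U j) ⊗ₖ Matrix.single i j (1 : ℂ)
    letI W : Matrix (Fin D × Fin 3) (Fin D × Fin 3) ℂ :=
      ∑ i : Fin 3, (U i) ⊗ₖ Matrix.single i i (1 : ℂ)
    Wᴴ * (G * Gᴴ) * W
      = ((D : ℂ))⁻¹ • ((1 : Matrix (Fin D) (Fin D) ℂ) ⊗ₖ
          ((3 : ℂ)⁻¹ • Matrix.of (fun _ _ : Fin 3 => (1 : ℂ)))) := by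
  set G : Matrix (Fin D × Fin 3) (Fin D × Fin 3) ℂ :=
    (((3 : ℝ) * Real.sqrt D : ℝ) : ℂ)⁻¹ •
      ∑ i : Fin 3, ∑ j : Fin 3, (U i * U j) ⊗ₖ Matrix.single i j (1 : ℂ) with hGdef
  set W : Matrix (Fin D × Fin 3) (Fin D × Fin 3) ℂ :=
    ∑ i : Fin 3, (U i) ⊗ₖ Matrix.single i i (1 : ℂ) with hWdef
  have hD0 : (D : ℂ) ≠ 0 := Nat.cast_ne_zero.mpr (by omega)
  have hU2 : ∀ i, U i * (U i)ᴴ = 1 := fun i => mul_eq_one_comm.mp (hU i)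
  set J : Matrix (Fin 3) (Fin 3) ℂ := Matrix.of (fun _ _ => 1) with hJdef
  set c : ℂ := (((3 : ℝ) * Real.sqrt D : ℝ) : ℂ)⁻¹ with hc
  set K : Matrix (Fin D × Fin 3) (Fin D × Fin 3) ℂ :=
    (1 : Matrix (Fin D) (Fin D) ℂ) ⊗ₖ J with hK
  have hW1 : W * Wᴴ = 1 := by
    have key : ∀ (i : Fin 3) (a p : Fin D),
        (∑ x, U i a x * (starRingEnd ℂ) (U i p x)) = if a = p then 1 else 0 := by
      intro i a p
      have := congrFun (congrFun (hU2 i) a) p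
      simpa [Matrix.mul_apply, Matrix.conjTranspose_apply, Matrix.one_apply] using this
    ext ⟨a, b⟩ ⟨p, q⟩
    simp only [hWdef, Matrix.mul_apply, Matrix.conjTranspose_apply, Matrix.sum_apply,
      Matrix.kroneckerMap_apply, Matrix.single, Matrix.of_apply,
      Fintype.sum_prod_type, Matrix.one_apply, Prod.mk.injEq]
    simp only [mul_ite, mul_one, mul_zero, ite_and, Finset.sum_ite_eq, Finset.sum_ite_eq',
      Finset.mem_univ, if_true, ite_mul, zero_mul, apply_ite star, star_zero]
    by_cases h : q = b
    · subst h; simp [Complex.star_def, key]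
    · have h2 : ¬ b = q := fun e => h e.symm
      simp [h, h2]
  have hW2 : Wᴴ * W = 1 := by
    have key : ∀ (i : Fin 3) (a p : Fin D),
        (∑ x, (starRingEnd ℂ) (U i x a) * U i x p) = if a = p then 1 else 0 := by
      intro i a p
      have := congrFun (congrFun (hU i) a) p
      simpa [Matrix.mul_apply, Matrix.conjTranspose_apply, Matrix.one_apply] using this
    ext ⟨a, b⟩ ⟨p, q⟩
    simp only [hWdef, Matrix.mul_apply, Matrix.conjTranspose_apply, Matrix.sum_apply,
      Matrix.kroneckerMap_apply, Matrix.single, Matrix.of_apply,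
      Fintype.sum_prod_type, Matrix.one_apply, Prod.mk.injEq]
    simp only [mul_ite, mul_one, mul_zero, ite_and, Finset.sum_ite_eq, Finset.sum_ite_eq',
      Finset.mem_univ, if_true, ite_mul, zero_mul, apply_ite star, star_zero]
    by_cases h : q = b
    · subst h; simp [Complex.star_def, key]
    · have h2 : ¬ b = q := fun e => h e.symm
      simp [h, h2]
  have hG : G = c • (W * K * W) := by
    rw [hGdef, hc]
    congr 1
    ext ⟨a, b⟩ ⟨p, q⟩
    fin_cases b <;> fin_cases q <;>
      simp [hWdef, hK, hJdef, Matrix.mul_apply, Matrix.sum_apply, Matrix.single,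
        Matrix.one_apply, Fintype.sum_prod_type, Fin.sum_univ_three, Finset.mul_sum,
        Finset.sum_mul]
  have hKH : Kᴴ = K := by
    ext ⟨a, b⟩ ⟨p, q⟩
    simp [hK, hJdef, Matrix.conjTranspose_apply, Matrix.one_apply, eq_comm]
  have hKK : K * K = (3 : ℂ) • K := by
    rw [hK, ← Matrix.mul_kronecker_mul, mul_one]
    have : J * J = (3 : ℂ) • J := by
      ext a b
      simp [hJdef, Matrix.mul_apply, Fin.sum_univ_three]
    rw [this, Matrix.kronecker_smul]
  have hs : Real.sqrt D * Real.sqrt D = D := Real.mul_self_sqrt (Nat.cast_nonneg D)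
  have hcc : c * star c = ((9 * (D : ℂ)))⁻¹ := by
    have h9 : ((3 : ℝ) * Real.sqrt D) * ((3 : ℝ) * Real.sqrt D) = 9 * (D : ℝ) := by
      have h' : ((3 : ℝ) * Real.sqrt D) * ((3 : ℝ) * Real.sqrt D)
          = 9 * (Real.sqrt D * Real.sqrt D) := by ring
      rw [h', hs]
    rw [hc, star_inv₀, Complex.star_def, Complex.conj_ofReal, ← mul_inv,
      ← Complex.ofReal_mul, h9]
    push_cast
    ring
  have expand : Wᴴ * (G * Gᴴ) * W = (c * star c) • (K * K) := by
    rw [hG]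
    rw [Matrix.conjTranspose_smul]
    simp only [Matrix.smul_mul, Matrix.mul_smul, smul_smul]
    rw [Matrix.conjTranspose_mul, Matrix.conjTranspose_mul, hKH]
    congr 1
    · rw [Complex.star_def, mul_comm]
    · simp only [← Matrix.mul_assoc]
      rw [hW2, Matrix.one_mul, Matrix.mul_assoc K W Wᴴ, hW1, Matrix.mul_one,
        Matrix.mul_assoc (K * K) Wᴴ W, hW2, Matrix.mul_one]
  rw [expand, hKK, hcc, smul_smul]
  rw [hK, hJdef, Matrix.kronecker_smul, smul_smul]
  congr 1
  field_simp
  ring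
end

section
/- With G as above (G = (1/(3√D)) Σ_{i,j=1}^3 U_i U_j ⊗ |i⟩⟨j|, U_1 = I, U_2, U_3 unitary), the von Neumann entropy of G G† equals log D. Equivalently, the entanglement entropy of the corresponding pure state across the cut is log D. -/
open Matrix Kronecker

section Aux

variable {D : ℕ}

private lemma sum_kron {ι : Type*} (s : Finset ι) (f : ι → Matrix (Fin D) (Fin D) ℂ)
    (B : Matrix (Fin 3) (Fin 3) ℂ) :
    (∑ j ∈ s, f j) ⊗ₖ B = ∑ j ∈ s, f j ⊗ₖ B := by
  ext ⟨a, b⟩ ⟨c, d⟩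
  simp [Matrix.kroneckerMap_apply, Matrix.sum_apply, Finset.sum_mul]

private lemma kron_conjT (A : Matrix (Fin D) (Fin D) ℂ) (B : Matrix (Fin 3) (Fin 3) ℂ) :
    (A ⊗ₖ B)ᴴ = Aᴴ ⊗ₖ Bᴴ := by
  ext ⟨a, b⟩ ⟨c, d⟩
  simp [Matrix.conjTranspose_apply, Matrix.kroneckerMap_apply, star_mul', mul_comm]

private lemma stdB_conjT (i j : Fin 3) :
    (Matrix.single i j (1 : ℂ))ᴴ = Matrix.single j i 1 := by
  ext a b
  simp only [Matrix.conjTranspose_apply, Matrix.single, Matrix.of_apply]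
  by_cases h : i = b ∧ j = a
  · rw [if_pos h, if_pos ⟨h.2, h.1⟩]; simp
  · rw [if_neg h, if_neg (fun hc => h ⟨hc.2, hc.1⟩)]; simp

private lemma mul_kron_sum (A B : Fin 3 → Fin 3 → Matrix (Fin D) (Fin D) ℂ) :
    (∑ i : Fin 3, ∑ j : Fin 3, A i j ⊗ₖ Matrix.single i j (1 : ℂ)) *
      (∑ k : Fin 3, ∑ l : Fin 3, B k l ⊗ₖ Matrix.single k l (1 : ℂ)) =
    ∑ i : Fin 3, ∑ l : Fin 3, (∑ j : Fin 3, A i j * B j l) ⊗ₖ Matrix.single i l (1 : ℂ) := by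
  simp_rw [Finset.sum_mul, Finset.mul_sum, ← Matrix.mul_kronecker_mul]
  refine Finset.sum_congr rfl fun i _ => ?_
  have hk : ∀ j : Fin 3,
      ∑ k : Fin 3, ∑ l : Fin 3,
        (A i j * B k l) ⊗ₖ (Matrix.single i j (1:ℂ) * Matrix.single k l 1) =
      ∑ l : Fin 3, (A i j * B j l) ⊗ₖ Matrix.single i l 1 := by
    intro j
    rw [Finset.sum_eq_single j]
    · simp [Matrix.single_mul_single_same]
    · intro b _ hb
      simp [Matrix.single_mul_single_of_ne (1:ℂ) i j b (Ne.symm hb)]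
    · simp
  simp_rw [hk]
  rw [Finset.sum_comm]
  refine Finset.sum_congr rfl fun l _ => ?_
  rw [sum_kron]

private lemma trace_eq_sum_eig {n : Type*} [Fintype n] [DecidableEq n]
    {A : Matrix n n ℂ} (hA : A.IsHermitian) :
    A.trace = ∑ i, (hA.eigenvalues i : ℂ) := by
  exact hA.trace_eq_sum_eigenvalues

end Aux

/-- With `U₁ = I`, `U₂, U₃` unitary and `G = (1/(3√D)) Σ_{i,j} U_i U_j ⊗ |i⟩⟨j|`,
the von Neumann entropy of `G Gᴴ` (the sum of `−λ log λ` over its eigenvalues)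
equals `log D`. -/
theorem stmt_8 (D : ℕ) (hD : 1 ≤ D) (U : Fin 3 → Matrix (Fin D) (Fin D) ℂ)
    (hU0 : U 0 = 1) (hU : ∀ i, (U i)ᴴ * U i = 1)
    (G : Matrix (Fin D × Fin 3) (Fin D × Fin 3) ℂ)
    (hG : G = (((3 : ℝ) * Real.sqrt D : ℝ) : ℂ)⁻¹ •
      ∑ i : Fin 3, ∑ j : Fin 3, (U i * U j) ⊗ₖ Matrix.single i j (1 : ℂ))
    (hherm : (G * Gᴴ).IsHermitian) :
    ∑ k, -(hherm.eigenvalues k * Real.log (hherm.eigenvalues k)) = Real.log D := by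
  classical
  set c : ℂ := (((3 : ℝ) * Real.sqrt D : ℝ) : ℂ)⁻¹ with hc
  set S : Matrix (Fin D × Fin 3) (Fin D × Fin 3) ℂ :=
    ∑ i : Fin 3, ∑ j : Fin 3, (U i * U j) ⊗ₖ Matrix.single i j (1 : ℂ) with hS
  set T : Matrix (Fin D × Fin 3) (Fin D × Fin 3) ℂ :=
    ∑ i : Fin 3, ∑ k : Fin 3, (U i * (U k)ᴴ) ⊗ₖ Matrix.single i k (1 : ℂ) with hT
  have hDR : (0 : ℝ) < (D : ℝ) := by exact_mod_cast hD
  have hDC : (D : ℂ) ≠ 0 := by exact_mod_cast hDR.ne'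
  have hsqrt : Real.sqrt D ≠ 0 := by positivity
  have hcne : c ≠ 0 := by
    simp only [hc, ne_eq, inv_eq_zero, Complex.ofReal_eq_zero]
    positivity
  have h9 : ((3 : ℝ) * Real.sqrt D) * ((3 : ℝ) * Real.sqrt D) = 9 * (D : ℝ) := by
    have := Real.mul_self_sqrt (by positivity : (0:ℝ) ≤ (D:ℝ))
    nlinarith [this]
  have hrc : (((3 : ℝ) * Real.sqrt D : ℝ) : ℂ) ≠ 0 := by
    simp only [ne_eq, Complex.ofReal_eq_zero]
    positivity
  have hrr : (((3 : ℝ) * Real.sqrt D : ℝ) : ℂ) * (((3 : ℝ) * Real.sqrt D : ℝ) : ℂ)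
      = 9 * (D : ℂ) := by exact_mod_cast congrArg (Complex.ofReal) h9
  have hcc : c * c = (9 * (D : ℂ))⁻¹ := by
    rw [hc, ← mul_inv, hrr]
  have hc2 : c * c * 9 * (D : ℂ) = 1 := by
    rw [hcc]
    field_simp
  have hUU : ∀ i, U i * (U i)ᴴ = 1 := fun i => mul_eq_one_comm.mp (hU i)
  -- T * T = 3 • T
  have hTT : T * T = (3 : ℂ) • T := by
    rw [hT, mul_kron_sum]
    rw [Finset.smul_sum]
    refine Finset.sum_congr rfl fun i _ => ?_
    rw [Finset.smul_sum]
    refine Finset.sum_congr rfl fun l _ => ?_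
    have : ∀ j : Fin 3, (U i * (U j)ᴴ) * (U j * (U l)ᴴ) = U i * (U l)ᴴ := by
      intro j
      calc (U i * (U j)ᴴ) * (U j * (U l)ᴴ) = U i * ((U j)ᴴ * U j) * (U l)ᴴ := by
            noncomm_ring
        _ = U i * (U l)ᴴ := by rw [hU j, mul_one]
    simp_rw [this, Finset.sum_const, Finset.card_univ, Fintype.card_fin]
    rw [← Nat.cast_smul_eq_nsmul ℂ 3, Matrix.smul_kronecker]
    norm_num
  -- Sᴴ
  have hSH : Sᴴ = ∑ a : Fin 3, ∑ b : Fin 3, ((U a)ᴴ * (U b)ᴴ) ⊗ₖ Matrix.single a b (1 : ℂ) := by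
    rw [hS, Matrix.conjTranspose_sum]
    simp_rw [Matrix.conjTranspose_sum, kron_conjT, stdB_conjT, Matrix.conjTranspose_mul]
    rw [Finset.sum_comm]

  -- S * Sᴴ = 3 • T
  have hSS : S * Sᴴ = (3 : ℂ) • T := by
    rw [hSH, hS, mul_kron_sum, hT, Finset.smul_sum]
    refine Finset.sum_congr rfl fun i _ => ?_
    rw [Finset.smul_sum]
    refine Finset.sum_congr rfl fun l _ => ?_
    have : ∀ j : Fin 3, (U i * U j) * ((U j)ᴴ * (U l)ᴴ) = U i * (U l)ᴴ := by
      intro j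
      calc (U i * U j) * ((U j)ᴴ * (U l)ᴴ) = U i * (U j * (U j)ᴴ) * (U l)ᴴ := by
            noncomm_ring
        _ = U i * (U l)ᴴ := by rw [hUU j, mul_one]
    simp_rw [this, Finset.sum_const, Finset.card_univ, Fintype.card_fin]
    rw [← Nat.cast_smul_eq_nsmul ℂ 3, Matrix.smul_kronecker]
    norm_num
  -- G Gᴴ = (3 c²) • T
  have hstarc : star c = c := by
    simp [hc, Complex.star_def, ← Complex.ofReal_inv, Complex.conj_ofReal]
  have hM : G * Gᴴ = ((3 : ℂ) * (c * c)) • T := by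
    rw [hG, Matrix.conjTranspose_smul, hstarc, Matrix.smul_mul, Matrix.mul_smul,
      hSS, smul_smul, smul_smul]
    congr 1
    ring
  -- M * M = D⁻¹ • M
  have hMM : (G * Gᴴ) * (G * Gᴴ) = ((D : ℂ)⁻¹) • (G * Gᴴ) := by
    rw [hM, Matrix.smul_mul, Matrix.mul_smul, hTT, smul_smul, smul_smul, smul_smul]
    congr 1
    rw [hcc]
    field_simp
    ring
  -- trace
  have htrT : T.trace = (3 : ℂ) * D := by
    rw [hT]
    rw [Matrix.trace_sum]
    have : ∀ i : Fin 3, (∑ k : Fin 3, (U i * (U k)ᴴ) ⊗ₖ Matrix.single i k (1:ℂ)).trace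
        = (D : ℂ) := by
      intro i
      rw [Matrix.trace_sum, Finset.sum_eq_single i]
      · rw [Matrix.trace_kronecker, hUU i, Matrix.trace_single_eq_same, mul_one,
          Matrix.trace_one]
        simp [Fintype.card_fin]
      · intro b _ hb
        rw [Matrix.trace_kronecker, Matrix.trace_single_eq_of_ne (c := (1:ℂ)) (h := Ne.symm hb), mul_zero]
      · simp
    simp_rw [this, Finset.sum_const, Finset.card_univ, Fintype.card_fin]
    push_cast [nsmul_eq_mul]
    ring
  have htr : (G * Gᴴ).trace = 1 := by
    rw [hM, Matrix.trace_smul, htrT, smul_eq_mul]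
    rw [hcc]
    field_simp
    ring
  -- eigenvalues are 0 or 1/D
  have heig : ∀ k, hherm.eigenvalues k = 0 ∨ hherm.eigenvalues k = 1 / (D : ℝ) := by
    intro k
    set v := ⇑(hherm.eigenvectorBasis k) with hv
    have hv0 : v ≠ 0 := by
      have := hherm.eigenvectorBasis.orthonormal.ne_zero k
      intro h
      apply this
      ext j
      exact congrFun h j
    have h1 : (G * Gᴴ) *ᵥ v = (hherm.eigenvalues k : ℂ) • v := by
      simpa using hherm.mulVec_eigenvectorBasis k
    have h2 : ((G * Gᴴ) * (G * Gᴴ)) *ᵥ v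
        = ((hherm.eigenvalues k : ℂ) * (hherm.eigenvalues k : ℂ)) • v := by
      rw [← Matrix.mulVec_mulVec, h1, Matrix.mulVec_smul, h1, smul_smul]
    rw [hMM, Matrix.smul_mulVec, h1, smul_smul] at h2
    have h3 : ((hherm.eigenvalues k : ℂ) * (hherm.eigenvalues k : ℂ)
        - (D : ℂ)⁻¹ * (hherm.eigenvalues k : ℂ)) • v = 0 := by
      rw [sub_smul, h2, sub_self]
    rcases smul_eq_zero.mp h3 with h4 | h4
    · have h5 : (hherm.eigenvalues k : ℂ) * ((hherm.eigenvalues k : ℂ) - (D : ℂ)⁻¹) = 0 := by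
        linear_combination h4
      rcases mul_eq_zero.mp h5 with h6 | h6
      · left; exact_mod_cast h6
      · right
        rw [one_div]
        refine Complex.ofReal_inj.mp ?_
        push_cast
        linear_combination h6
    · exact absurd h4 hv0
  -- sum of eigenvalues is 1
  have hsum : ∑ k, hherm.eigenvalues k = 1 := by
    have := trace_eq_sum_eig hherm
    rw [htr] at this
    have : ((∑ k, hherm.eigenvalues k : ℝ) : ℂ) = ((1 : ℝ) : ℂ) := by
      push_cast
      rw [← this]
    exact_mod_cast this
  -- conclude
  have hterm : ∀ k, -(hherm.eigenvalues k * Real.log (hherm.eigenvalues k))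
      = hherm.eigenvalues k * Real.log D := by
    intro k
    rcases heig k with h | h
    · simp [h]
    · rw [h, one_div, Real.log_inv]
      ring
  simp_rw [hterm]
  rw [← Finset.sum_mul, hsum, one_mul]
end
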